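/- In the setting of a finite-index normal subgroup N ⊴ G with quotient A, an irreducible N-representation L with full stabilizer, and the associated 2-cocycle α and twisted group algebra 𝒜 with basis {ρ_a}, the formula (f ⊗ v)·ρ_a := (fa) ⊗ γ(f,a)·θ_a(v) defines the structure of a right 𝒜-module on k[A] ⊗ L, and this right action commutes with the left G-action ι(a)g·(f⊗v) = (af) ⊗ γ(a,f)·(ι(f)⁻¹gι(f))·v. -/
import Mathlib


/-- In the Clifford-theoretic setting (`N ⊴ G` of finite index, `A = G ⧸ N`, section `ι`
with `ι 1 = 1`, irreducible `N`-representation `L = (V, ρ)` with full stabilizer witnessed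
by isomorphisms `θ_a : L ≅ {}^{ι a}L`, `θ_1 = id`, and associated 2-cocycle `α` with
`γ(a,b)·θ_b(θ_a v) = α(a,b)•θ_{ab} v`), the formula `(f ⊗ v)·ρ_a := (fa) ⊗ γ(f,a)·θ_a(v)`
defines a right module structure over the twisted group algebra `𝒜` on `k[A] ⊗ L`
(realized as functions `A → V`, where `RA a F b = ρ(γ(b a⁻¹, a)) (θ_a (F (b a⁻¹)))`),
and this right action commutes with the left `G`-action
`ι(a)g·(f⊗v) = af ⊗ γ(a,f)·(ι(f)⁻¹gι(f))·v` (closed form `σ`). -/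
theorem right_twisted_algebra_action {k G V : Type*} [Field k] [IsAlgClosed k] [Group G]
    [AddCommGroup V] [Module k V] [FiniteDimensional k V]
    (N : Subgroup G) [hN : N.Normal] [Finite (G ⧸ N)]
    (ρ : Representation k N V)
    (ι : G ⧸ N → G) (hι : ∀ a, QuotientGroup.mk' N (ι a) = a) (hι1 : ι 1 = 1)
    (θ : G ⧸ N → (V ≃ₗ[k] V)) (hθ1 : θ 1 = LinearEquiv.refl k V)
    (hθ : ∀ (a : G ⧸ N) (n : N) (v : V),
      θ a (ρ n v) =
        ρ ⟨(ι a)⁻¹ * ↑n * ι a, by simpa using hN.conj_mem _ n.2 (ι a)⁻¹⟩ (θ a v))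
    (α : G ⧸ N → G ⧸ N → kˣ)
    (hα : ∀ (a b : G ⧸ N) (v : V),
      ρ ⟨(ι (a * b))⁻¹ * ι a * ι b, by
          rw [← QuotientGroup.eq_one_iff]
          show (QuotientGroup.mk' N) ((ι (a * b))⁻¹ * ι a * ι b) = 1
          simp only [map_mul, map_inv, hι]
          group⟩
        (θ b (θ a v)) = (α a b : k) • θ (a * b) v)
    (σ : Representation k G ((G ⧸ N) → V))
    (hσ : ∀ (x : G) (F : (G ⧸ N) → V) (b : G ⧸ N),
      σ x F b =
        ρ ⟨(ι b)⁻¹ * x * ι ((QuotientGroup.mk' N x)⁻¹ * b), by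
            rw [← QuotientGroup.eq_one_iff]
            show (QuotientGroup.mk' N) ((ι b)⁻¹ * x * ι ((QuotientGroup.mk' N x)⁻¹ * b)) = 1
            simp only [map_mul, map_inv, hι]
            group⟩
          (F ((QuotientGroup.mk' N x)⁻¹ * b)))
    (RA : G ⧸ N → ((G ⧸ N) → V) → ((G ⧸ N) → V))
    (hRA : ∀ (a : G ⧸ N) (F : (G ⧸ N) → V) (b : G ⧸ N),
      RA a F b =
        ρ ⟨(ι b)⁻¹ * ι (b * a⁻¹) * ι a, by
            rw [← QuotientGroup.eq_one_iff]
            show (QuotientGroup.mk' N) ((ι b)⁻¹ * ι (b * a⁻¹) * ι a) = 1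
            simp only [map_mul, map_inv, hι]
            group⟩
          (θ a (F (b * a⁻¹)))) :
    (∀ (a : G ⧸ N) (c : k) (F F' : (G ⧸ N) → V), RA a (c • F + F') = c • RA a F + RA a F') ∧
    (∀ F, RA 1 F = F) ∧
    (∀ (a b : G ⧸ N) (F : (G ⧸ N) → V), RA b (RA a F) = (α a b : k) • RA (a * b) F) ∧
    (∀ (x : G) (a : G ⧸ N) (F : (G ⧸ N) → V), σ x (RA a F) = RA a (σ x F)) := by
  have hcomp : ∀ (n m : N) (v : V), ρ n (ρ m v) = ρ (n * m) v := by
    intro n m v; rw [map_mul]; rfl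
  have hone : ∀ (n : N) (v : V), (n : G) = 1 → ρ n v = v := by
    intro n v hn
    have : n = 1 := Subtype.ext hn
    simp [this]
  refine ⟨?_, ?_, ?_, ?_⟩
  · intro a c F F'
    funext b
    simp [hRA, map_add, map_smul]
  · intro F
    funext b
    rw [hRA]
    simp only [inv_one, mul_one, hθ1, LinearEquiv.refl_apply]
    exact hone _ _ (by simp [hι1])
  · intro a b F
    funext c
    have harg : c * (a * b)⁻¹ = c * b⁻¹ * a⁻¹ := by group
    rw [Pi.smul_apply]
    simp only [hRA, hθ, hcomp]
    rw [← map_smul, ← hα a b (F (c * (a * b)⁻¹)), hcomp]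
    congr 1
    · ext
      simp [mul_assoc, mul_inv_rev]
    · rw [harg]
  · intro x a F
    funext c
    have harg : (QuotientGroup.mk' N x)⁻¹ * c * a⁻¹ = (QuotientGroup.mk' N x)⁻¹ * (c * a⁻¹) := by
      group
    simp only [hσ, hRA, hθ, hcomp]
    congr 1
    · ext
      simp [mul_assoc]
    · rw [harg]
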